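/- In any algebra satisfying (B1)–(B10), the defined operation ∼x := (x ∨ ¬x) ∧ ∼̇x is antitone: if x ≤ y then ∼y ≤ ∼x. -/
import Mathlib

theorem stmt {A : Type*} [DistribLattice A] [BoundedOrder A]
    (n s : A → A)
    (B1 : ∀ x : A, x ⊓ n x = ⊥)
    (B2 : ∀ x : A, x ⊔ s x = ⊤)
    (B3 : ∀ x : A, n x ⊓ s (n x) = ⊥)
    (B4 : ∀ x : A, s x ⊔ n (s x) = ⊤)
    (B5 : ∀ x y : A, s (x ⊓ y) = s x ⊔ s y)
    (B6 : ∀ x y : A, n (x ⊔ y) = n x ⊓ n y)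
    (B7 : ∀ x y : A, n (x ⊓ n y) = n x ⊔ n (n y))
    (B8 : ∀ x y : A, s (x ⊔ s y) = s x ⊓ s (s y))
    (B9 : ∀ x y : A, (x ⊔ y) ⊓ s (x ⊔ y) ≤ x ⊔ n x)
    (B10 : ∀ x y : A, x ⊓ s x ⊓ y ⊓ s y ≤ s (x ⊔ y))
    (m : A → A) (hm : ∀ x : A, m x = (x ⊔ n x) ⊓ s x) :
    ∀ x y : A, x ≤ y → m y ≤ m x := by
  intro x y hxy
  have hs : s y ≤ s x := by
    have h := B5 x y
    rw [inf_eq_left.mpr hxy] at h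
    rw [h]; exact le_sup_right
  have hn : n y ≤ n x := by
    have h := B6 x y
    rw [sup_eq_right.mpr hxy] at h
    rw [h]; exact inf_le_left
  have h9 := B9 x y
  rw [sup_eq_right.mpr hxy] at h9
  rw [hm x, hm y, inf_sup_right]
  apply sup_le
  · exact le_inf h9 (inf_le_right.trans hs)
  · exact le_inf (inf_le_left.trans (hn.trans le_sup_right)) (inf_le_right.trans hs)
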